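/- Let f : X × U → X satisfy d(f(x₁,u), f(x₂,u)) ≤ L_x·d(x₁,x₂) for all x₁, x₂, u, with L_x > 0. Suppose B(z, σ) ⊆ C(x_T, ε) (every state in B(z,σ) is ε-controllable to x_T), and (x_i, u_i, x_i') is a sample with f(x_i, u_i) = x_i' and x_i' ∈ B(z, σ). Then B(x_i, (σ − d(x_i', z))/L_x) ⊆ C(x_T, ε). -/

import Mathlib

def Reaches {X U : Type*} (f : X → U → X) (x y : X) : Prop :=
  ∃ l : List U, l.foldl f x = y

def ctrlSet {X U : Type*} [MetricSpace X] (f : X → U → X) (xT : X) (ε : ℝ) : Set X :=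
  {x | ∃ z ∈ Metric.closedBall xT ε, Reaches f x z}

theorem backprop_subset {X U : Type*} [MetricSpace X] (f : X → U → X)
    (Lx : ℝ) (hLx : 0 < Lx)
    (hLip : ∀ (x₁ x₂ : X) (u : U), dist (f x₁ u) (f x₂ u) ≤ Lx * dist x₁ x₂)
    (xT z : X) (σ ε : ℝ)
    (hball : Metric.closedBall z σ ⊆ ctrlSet f xT ε)
    (xi : X) (ui : U) (xi' : X)
    (hsample : f xi ui = xi') (hmem : xi' ∈ Metric.closedBall z σ) :
    Metric.closedBall xi ((σ - dist xi' z) / Lx) ⊆ ctrlSet f xT ε := by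
  intro x hx
  rw [Metric.mem_closedBall] at hx hmem
  have hstep : f x ui ∈ Metric.closedBall z σ := by
    rw [Metric.mem_closedBall]
    calc dist (f x ui) z ≤ dist (f x ui) (f xi ui) + dist (f xi ui) z := dist_triangle _ _ _
      _ ≤ Lx * dist x xi + dist xi' z := by
          rw [← hsample]; have := hLip x xi ui; linarith
      _ ≤ Lx * ((σ - dist xi' z) / Lx) + dist xi' z :=
          add_le_add (mul_le_mul_of_nonneg_left hx hLx.le) le_rfl
      _ = σ := by field_simp; ring
  obtain ⟨w, hw, l, hl⟩ := hball hstep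
  exact ⟨w, hw, ui :: l, hl⟩
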